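/- Let n, N ∈ ℕ with N ≥ 2 and let L_d be a smooth real-valued function on pairs of invertible n×n real matrices which is left-invariant: L_d(g·a, g·b) = L_d(a, b) for all invertible g, a, b. Define the reduced Lagrangian L̂(W) := L_d(1, W). Fix invertible g₀ and g_N. Then for a sequence of invertible matrices g₀, g₁, …, g_N with W_k := g_k⁻¹ g_{k+1}, the following are equivalent: (a) for all η₀, η₁, …, η_N ∈ Matrix(n,ℝ) with η₀ = η_N = 0, the derivative at ε = 0 of Σ_{k=0}^{N-1} L_d(g_k · exp(ε η_k), g_{k+1} · exp(ε η_{k+1})) vanishes; (b) the discrete Euler–Poincaré equations hold: for every k = 1, …, N−1 and every η ∈ Matrix(n,ℝ), DL̂(W_k)(η · W_k) = DL̂(W_{k-1})(W_{k-1} · η), i.e. r*_{W_k} L̂'(W_k) − ℓ*_{W_{k-1}} L̂'(W_{k-1}) = 0. -/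

import Mathlib

open scoped ContDiff BigOperators

attribute [local instance] Matrix.normedAddCommGroup Matrix.normedSpace

namespace Stmt11

abbrev Mat (n : ℕ) := Matrix (Fin n) (Fin n) ℝ

/-- Type synonym for matrices carrying the `L∞` operator norm, which makes
them a normed algebra so that the derivative of the exponential is available. -/
def LMat (n : ℕ) := Matrix (Fin n) (Fin n) ℝ

noncomputable instance {n} : NormedRing (LMat n) := Matrix.linftyOpNormedRing
noncomputable instance {n} : NormedAlgebra ℝ (LMat n) := Matrix.linftyOpNormedAlgebra
instance {n} : CompleteSpace (LMat n) :=
  inferInstanceAs (CompleteSpace (Matrix (Fin n) (Fin n) ℝ))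
instance {n} : FiniteDimensional ℝ (LMat n) :=
  inferInstanceAs (FiniteDimensional ℝ (Matrix (Fin n) (Fin n) ℝ))

def toL {n} : Mat n → LMat n := id

noncomputable def eL (n : ℕ) : LMat n ≃ₗ[ℝ] Mat n where
  toFun := id
  invFun := id
  map_add' _ _ := rfl
  map_smul' _ _ := rfl
  left_inv _ := rfl
  right_inv _ := rfl

noncomputable def eCL (n : ℕ) : LMat n ≃L[ℝ] Mat n := (eL n).toContinuousLinearEquiv

lemma hasDerivAt_conj {n : ℕ} (η ζ W : Mat n) :
    HasDerivAt (fun ε : ℝ =>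
      NormedSpace.exp (ε • (-η)) * W * NormedSpace.exp (ε • ζ)) (W * ζ - η * W) 0 := by
  have h1 : HasDerivAt (fun ε : ℝ => NormedSpace.exp (ε • toL (-η))) (toL (-η)) 0 := by
    simpa using hasDerivAt_exp_smul_const (𝕂 := ℝ) (toL (-η)) 0
  have h2 : HasDerivAt (fun ε : ℝ => NormedSpace.exp (ε • toL ζ)) (toL ζ) 0 := by
    simpa using hasDerivAt_exp_smul_const (𝕂 := ℝ) (toL ζ) 0
  have h3 : HasDerivAt (fun ε : ℝ =>
      NormedSpace.exp (ε • toL (-η)) * toL W * NormedSpace.exp (ε • toL ζ))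
      (toL W * toL ζ - toL η * toL W) 0 := by
    have := (h1.mul_const (toL W)).mul h2
    simp only [NormedSpace.exp_zero, zero_smul] at this
    convert this using 1
    · rfl
    show _ = (-toL η) * toL W * 1 + 1 * toL W * toL ζ
    noncomm_ring
  exact ((eCL n).hasFDerivAt).comp_hasDerivAt 0 h3

lemma isOpen_unit_pairs {n : ℕ} : IsOpen {p : Mat n × Mat n | IsUnit p.1 ∧ IsUnit p.2} := by
  have h1 : IsOpen {M : Mat n | IsUnit M} := by
    have : {M : Mat n | IsUnit M} = (fun M : Mat n => M.det) ⁻¹' {x : ℝ | x ≠ 0} := by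
      ext M; simp [Matrix.isUnit_iff_isUnit_det, isUnit_iff_ne_zero]
    rw [this]
    exact IsOpen.preimage (continuous_id.matrix_det) isOpen_ne
  exact (h1.preimage continuous_fst).inter (h1.preimage continuous_snd)

lemma diff_Lhat {n : ℕ} (L : Mat n × Mat n → ℝ)
    (hL : ContDiffOn ℝ ∞ L {p : Mat n × Mat n | IsUnit p.1 ∧ IsUnit p.2})
    {W : Mat n} (hW : IsUnit W) :
    DifferentiableAt ℝ (fun W : Mat n => L (1, W)) W := by
  have h1 : DifferentiableAt ℝ L ((1 : Mat n), W) := by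
    refine (hL.differentiableOn (by simp)).differentiableAt
      (isOpen_unit_pairs.mem_nhds ⟨isUnit_one, hW⟩)
  have h2 : DifferentiableAt ℝ (fun W : Mat n => ((1 : Mat n), W)) W :=
    DifferentiableAt.prodMk (differentiableAt_const _) differentiableAt_id
  exact h1.comp W h2

lemma red {n : ℕ} (L : Mat n × Mat n → ℝ)
    (hinv : ∀ g a b : Mat n, IsUnit g → IsUnit a → IsUnit b →
      L (g * a, g * b) = L (a, b))
    {a b : Mat n} (ha : IsUnit a) (hb : IsUnit b) :
    L (a, b) = L (1, a⁻¹ * b) := by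
  have hdet : IsUnit a.det := (Matrix.isUnit_iff_isUnit_det a).mp ha
  have hainv : IsUnit a⁻¹ :=
    (Matrix.isUnit_iff_isUnit_det _).mpr (Matrix.isUnit_nonsing_inv_det a hdet)
  have := hinv a⁻¹ a b hainv ha hb
  rw [Matrix.nonsing_inv_mul a hdet] at this
  exact this.symm

lemma term_deriv {n : ℕ} (L : Mat n × Mat n → ℝ)
    (hL : ContDiffOn ℝ ∞ L {p : Mat n × Mat n | IsUnit p.1 ∧ IsUnit p.2})
    (hinv : ∀ g a b : Mat n, IsUnit g → IsUnit a → IsUnit b →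
      L (g * a, g * b) = L (a, b))
    {a b : Mat n} (ha : IsUnit a) (hb : IsUnit b) (η ζ : Mat n) :
    HasDerivAt (fun ε : ℝ =>
        L (a * NormedSpace.exp (ε • η), b * NormedSpace.exp (ε • ζ)))
      (fderiv ℝ (fun W : Mat n => L (1, W)) (a⁻¹ * b)
        (a⁻¹ * b * ζ - η * (a⁻¹ * b))) 0 := by
  have hdet : IsUnit a.det := (Matrix.isUnit_iff_isUnit_det a).mp ha
  have hainv : IsUnit a⁻¹ :=
    (Matrix.isUnit_iff_isUnit_det _).mpr (Matrix.isUnit_nonsing_inv_det a hdet)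
  have hWu : IsUnit (a⁻¹ * b) := hainv.mul hb
  have hfun : (fun ε : ℝ =>
      L (a * NormedSpace.exp (ε • η), b * NormedSpace.exp (ε • ζ)))
      = fun ε : ℝ => L (1, NormedSpace.exp (ε • (-η)) * (a⁻¹ * b)
        * NormedSpace.exp (ε • ζ)) := by
    funext ε
    have hE1 : IsUnit (NormedSpace.exp (ε • η)) := Matrix.isUnit_exp _
    have hE2 : IsUnit (NormedSpace.exp (ε • ζ)) := Matrix.isUnit_exp _
    rw [red L hinv (ha.mul hE1) (hb.mul hE2)]
    congr 1
    rw [Matrix.mul_inv_rev]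
    have : (NormedSpace.exp (ε • η))⁻¹ = NormedSpace.exp (ε • (-η)) := by
      rw [smul_neg, Matrix.exp_neg]
    rw [this]
    noncomm_ring
  rw [hfun]
  have hc := hasDerivAt_conj η ζ (a⁻¹ * b)
  have hd := (diff_Lhat L hL hWu).hasFDerivAt
  have := hd.comp_hasDerivAt_of_eq 0 hc (by simp)
  exact this

theorem discrete_euler_poincare_left_invariant
    {n N : ℕ} (hN : 2 ≤ N)
    (L : Mat n × Mat n → ℝ)
    (hL : ContDiffOn ℝ ∞ L {p : Mat n × Mat n | IsUnit p.1 ∧ IsUnit p.2})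
    (hinv : ∀ g a b : Mat n, IsUnit g → IsUnit a → IsUnit b →
      L (g * a, g * b) = L (a, b))
    (g : ℕ → Mat n) (hg : ∀ i, IsUnit (g i)) :
    (∀ η : ℕ → Mat n, η 0 = 0 → η N = 0 →
        deriv (fun ε : ℝ =>
          ∑ k ∈ Finset.range N,
            L (g k * NormedSpace.exp (ε • η k),
               g (k + 1) * NormedSpace.exp (ε • η (k + 1)))) 0 = 0)
      ↔ ∀ k : ℕ, 1 ≤ k → k ≤ N - 1 → ∀ η : Mat n,
          fderiv ℝ (fun W => L (1, W)) ((g k)⁻¹ * g (k + 1))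
              (η * ((g k)⁻¹ * g (k + 1)))
            = fderiv ℝ (fun W => L (1, W)) ((g (k - 1))⁻¹ * g k)
              ((g (k - 1))⁻¹ * g k * η) := by
  obtain ⟨M, rfl⟩ : ∃ M, N = M + 1 := ⟨N - 1, by omega⟩
  have hM : 1 ≤ M := by omega
  set W : ℕ → Mat n := fun k => (g k)⁻¹ * g (k + 1) with hW
  set D : ℕ → Mat n →L[ℝ] ℝ :=
    fun k => fderiv ℝ (fun W : Mat n => L (1, W)) (W k) with hD
  have master : ∀ η : ℕ → Mat n, η 0 = 0 → η (M + 1) = 0 →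
      deriv (fun ε : ℝ =>
          ∑ k ∈ Finset.range (M + 1),
            L (g k * NormedSpace.exp (ε • η k),
               g (k + 1) * NormedSpace.exp (ε • η (k + 1)))) 0
        = ∑ k ∈ Finset.range M,
            (D k (W k * η (k + 1)) - D (k + 1) (η (k + 1) * W (k + 1))) := by
    intro η h0 hN'
    have hsum : HasDerivAt (fun ε : ℝ =>
        ∑ k ∈ Finset.range (M + 1),
          L (g k * NormedSpace.exp (ε • η k),
             g (k + 1) * NormedSpace.exp (ε • η (k + 1))))
        (∑ k ∈ Finset.range (M + 1),
          D k (W k * η (k + 1) - η k * W k)) 0 := by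
      refine HasDerivAt.fun_sum fun k _ => ?_
      exact term_deriv L hL hinv (hg k) (hg (k + 1)) (η k) (η (k + 1))
    rw [hsum.deriv]
    have hsplit : ∀ k, D k (W k * η (k + 1) - η k * W k)
        = D k (W k * η (k + 1)) - D k (η k * W k) := fun k => map_sub _ _ _
    simp only [hsplit]
    rw [Finset.sum_sub_distrib]
    rw [Finset.sum_range_succ, Finset.sum_range_succ']
    rw [hN', h0]
    simp only [Matrix.mul_zero, Matrix.zero_mul, map_zero, add_zero, zero_add]
    rw [← Finset.sum_sub_distrib]
  constructor
  · intro hcrit k hk1 hk2 η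
    set η' : ℕ → Mat n := fun j => if j = k then η else 0 with hη'
    have h0 : η' 0 = 0 := if_neg (by omega)
    have hN' : η' (M + 1) = 0 := if_neg (by omega)
    have hval := hcrit η' h0 hN'
    rw [master η' h0 hN'] at hval
    rw [Finset.sum_eq_single (k - 1)] at hval
    · have hk' : k - 1 + 1 = k := by omega
      rw [hk'] at hval
      have hη'k : η' k = η := if_pos rfl
      rw [hη'k] at hval
      have : D k (η * W k) = D (k - 1) (W (k - 1) * η) := by
        have := sub_eq_zero.mp hval
        exact this.symm
      simpa [hD, hW, hk'] using this
    · intro b hb hbne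
      have : η' (b + 1) = 0 := if_neg (by omega)
      rw [this]
      simp
    · intro hnot
      exact absurd (Finset.mem_range.mpr (by omega)) hnot
  · intro hEP η h0 hN'
    rw [master η h0 hN']
    refine Finset.sum_eq_zero fun k hk => ?_
    rw [Finset.mem_range] at hk
    have := hEP (k + 1) (by omega) (by omega) (η (k + 1))
    have hk' : k + 1 - 1 = k := by omega
    rw [hk'] at this
    rw [sub_eq_zero]
    exact this.symm

end Stmt11
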